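/- Let M be a map with flag set F and generators s0, s1, s2, and let r0, r1, r2 be the truncation generators on F × {0,1,2}. Suppose M is a 3-orbit map and Tr(M) is a 3-orbit map. Then both M and Tr(M) are of type 3^{02}. -/

import Mathlib

/-- The automorphism group of a map with generators t0, t1, t2. -/
def mapAut {α : Type*} (t0 t1 t2 : Equiv.Perm α) : Subgroup (Equiv.Perm α) :=
  Subgroup.centralizer {t0, t1, t2}

/-- A 3-orbit map with generators t0, t1, t2 is of type 3^{02} if its three flag orbits can be
labelled O1, O2, O3 so that t0 and t2 each map O1 to itself and interchange O2 and O3,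
while t1 interchanges O1 and O2 and maps O3 to itself. -/
def isOfType302 {α : Type*} (t0 t1 t2 : Equiv.Perm α) : Prop :=
  ∃ O1 O2 O3 : Set α,
    (∃ x, MulAction.orbit (↥(mapAut t0 t1 t2)) x = O1) ∧
    (∃ x, MulAction.orbit (↥(mapAut t0 t1 t2)) x = O2) ∧
    (∃ x, MulAction.orbit (↥(mapAut t0 t1 t2)) x = O3) ∧
    O1 ≠ O2 ∧ O1 ≠ O3 ∧ O2 ≠ O3 ∧
    (∀ x, MulAction.orbit (↥(mapAut t0 t1 t2)) x = O1 ∨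
          MulAction.orbit (↥(mapAut t0 t1 t2)) x = O2 ∨
          MulAction.orbit (↥(mapAut t0 t1 t2)) x = O3) ∧
    ⇑t0 '' O1 = O1 ∧ ⇑t0 '' O2 = O3 ∧ ⇑t0 '' O3 = O2 ∧
    ⇑t2 '' O1 = O1 ∧ ⇑t2 '' O2 = O3 ∧ ⇑t2 '' O3 = O2 ∧
    ⇑t1 '' O1 = O2 ∧ ⇑t1 '' O2 = O1 ∧ ⇑t1 '' O3 = O3

/-- If a set is (iff-)invariant under three permutations, it is invariant under every
element of the subgroup they generate. -/
lemma invariant_of_closure {α : Type*} {t0 t1 t2 : Equiv.Perm α} {S : Set α}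
    (h0 : ∀ x, x ∈ S ↔ t0 x ∈ S) (h1 : ∀ x, x ∈ S ↔ t1 x ∈ S)
    (h2 : ∀ x, x ∈ S ↔ t2 x ∈ S) :
    ∀ g ∈ Subgroup.closure ({t0, t1, t2} : Set (Equiv.Perm α)), ∀ x, x ∈ S ↔ g x ∈ S := by
  intro g hg
  induction hg using Subgroup.closure_induction with
  | mem t ht =>
    have ht' : t = t0 ∨ t = t1 ∨ t = t2 := by simpa using ht
    rcases ht' with rfl | rfl | rfl
    · exact h0
    · exact h1
    · exact h2
  | one => intro x; simp
  | mul u v hu hv hu' hv' =>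
    intro x
    exact (hv' x).trans (hu' (v x))
  | inv u hu hu' =>
    intro x
    have := hu' (u⁻¹ x)
    rw [show u (u⁻¹ x) = x from Equiv.apply_symm_apply u x] at this
    exact this.symm

set_option synthInstance.maxSize 2000 in
set_option maxHeartbeats 4000000 in
/-- The key combinatorial fact about permutations of a three-element set. -/
lemma fin3_main (σ0 σ1 σ2 ρ2 : Equiv.Perm (Fin 3))
    (h0 : ∀ x, σ0 (σ0 x) = x) (h1 : ∀ x, σ1 (σ1 x) = x) (h2 : ∀ x, σ2 (σ2 x) = x)
    (hρ : ∀ x, ρ2 (ρ2 x) = x)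
    (hc02 : ∀ x, σ0 (σ2 x) = σ2 (σ0 x)) (hc1ρ : ∀ x, σ1 (ρ2 x) = ρ2 (σ1 x))
    (hstar : ∀ x, σ1 (σ2 (ρ2 x)) = σ2 (ρ2 (σ0 x)))
    (htr : ∀ s : Finset (Fin 3), s.Nonempty →
      (∀ x ∈ s, σ0 x ∈ s ∧ σ1 x ∈ s ∧ σ2 x ∈ s) → s = Finset.univ) :
    (∀ x, σ0 x = σ2 x) ∧ (∀ x, ρ2 x = σ1 x) ∧
    ∃ a b c : Fin 3, a ≠ b ∧ a ≠ c ∧ b ≠ c ∧ (∀ z, z = a ∨ z = b ∨ z = c) ∧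
      σ2 a = a ∧ σ2 b = c ∧ σ2 c = b ∧ σ1 a = b ∧ σ1 b = a ∧ σ1 c = c := by
  revert h0 h1 h2 hρ hc02 hc1ρ hstar htr
  revert σ0 σ1 σ2 ρ2
  decide

set_option maxHeartbeats 4000000 in
/-- if M and Tr(M) are both 3-orbit maps, then both are of type 3^{02}. -/
theorem truncation_of_three_orbit_three_orbit
    {F : Type*} [Fintype F] [Nonempty F]
    (s0 s1 s2 : Equiv.Perm F)
    (hs0i : s0 * s0 = 1) (hs0f : ∀ x, s0 x ≠ x)
    (hs1i : s1 * s1 = 1) (hs1f : ∀ x, s1 x ≠ x)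
    (hs2i : s2 * s2 = 1) (hs2f : ∀ x, s2 x ≠ x)
    (hcomm : s0 * s2 = s2 * s0)
    (hs02i : (s0 * s2) * (s0 * s2) = 1) (hs02f : ∀ x, (s0 * s2) x ≠ x)
    (htrans : ∀ x y : F, ∃ g ∈ Subgroup.closure ({s0, s1, s2} : Set (Equiv.Perm F)), g x = y)
    (r0 r1 r2 : Equiv.Perm (F × Fin 3))
    (hr0 : ∀ Φ : F, r0 (Φ, 0) = (s1 Φ, 0) ∧ r0 (Φ, 1) = (s0 Φ, 1) ∧ r0 (Φ, 2) = (s1 Φ, 2))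
    (hr1 : ∀ Φ : F, r1 (Φ, 0) = (s2 Φ, 0) ∧ r1 (Φ, 1) = (Φ, 2) ∧ r1 (Φ, 2) = (Φ, 1))
    (hr2 : ∀ Φ : F, r2 (Φ, 0) = (Φ, 2) ∧ r2 (Φ, 1) = (s2 Φ, 1) ∧ r2 (Φ, 2) = (Φ, 0))
    (hM3 : Nat.card (MulAction.orbitRel.Quotient
      (↥(Subgroup.centralizer ({s0, s1, s2} : Set (Equiv.Perm F)))) F) = 3)
    (hTr3 : Nat.card (MulAction.orbitRel.Quotient
      (↥(Subgroup.centralizer ({r0, r1, r2} : Set (Equiv.Perm (F × Fin 3))))) (F × Fin 3)) = 3) :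
    isOfType302 s0 s1 s2 ∧ isOfType302 r0 r1 r2 := by
  classical
  -- pointwise versions of the involution/commutation hypotheses
  have ps0 : ∀ x, s0 (s0 x) = x := fun x => by simpa using Equiv.ext_iff.mp hs0i x
  have ps1 : ∀ x, s1 (s1 x) = x := fun x => by simpa using Equiv.ext_iff.mp hs1i x
  have ps2 : ∀ x, s2 (s2 x) = x := fun x => by simpa using Equiv.ext_iff.mp hs2i x
  have pc : ∀ x, s0 (s2 x) = s2 (s0 x) := fun x => by simpa using Equiv.ext_iff.mp hcomm x
  have hr00 : ∀ a : F, r0 (a, 0) = (s1 a, 0) := fun a => (hr0 a).1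
  have hr01 : ∀ a : F, r0 (a, 1) = (s0 a, 1) := fun a => (hr0 a).2.1
  have hr02 : ∀ a : F, r0 (a, 2) = (s1 a, 2) := fun a => (hr0 a).2.2
  have hr10 : ∀ a : F, r1 (a, 0) = (s2 a, 0) := fun a => (hr1 a).1
  have hr11 : ∀ a : F, r1 (a, 1) = (a, 2) := fun a => (hr1 a).2.1
  have hr12 : ∀ a : F, r1 (a, 2) = (a, 1) := fun a => (hr1 a).2.2
  have hr20 : ∀ a : F, r2 (a, 0) = (a, 2) := fun a => (hr2 a).1
  have hr21 : ∀ a : F, r2 (a, 1) = (s2 a, 1) := fun a => (hr2 a).2.1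
  have hr22 : ∀ a : F, r2 (a, 2) = (a, 0) := fun a => (hr2 a).2.2
  have f3 : ∀ i : Fin 3, i = 0 ∨ i = 1 ∨ i = 2 := by decide
  -- pointwise facts about the truncation generators
  have pr0 : ∀ y, r0 (r0 y) = y := by
    rintro ⟨a, i⟩
    rcases f3 i with rfl | rfl | rfl
    · rw [hr00, hr00, ps1]
    · rw [hr01, hr01, ps0]
    · rw [hr02, hr02, ps1]
  have pr1 : ∀ y, r1 (r1 y) = y := by
    rintro ⟨a, i⟩
    rcases f3 i with rfl | rfl | rfl
    · rw [hr10, hr10, ps2]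
    · rw [hr11, hr12]
    · rw [hr12, hr11]
  have pr2 : ∀ y, r2 (r2 y) = y := by
    rintro ⟨a, i⟩
    rcases f3 i with rfl | rfl | rfl
    · rw [hr20, hr22]
    · rw [hr21, hr21, ps2]
    · rw [hr22, hr20]
  have prc : ∀ y, r0 (r2 y) = r2 (r0 y) := by
    rintro ⟨a, i⟩
    rcases f3 i with rfl | rfl | rfl
    · rw [hr20, hr02, hr00, hr20]
    · rw [hr21, hr01, hr01, hr21, pc]
    · rw [hr22, hr00, hr02, hr22]
  have hw0 : ∀ a : F, r2 (r1 (r0 (r1 (r2 (a, 0))))) = (s0 a, 0) := by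
    intro a; rw [hr20, hr12, hr01, hr11, hr22]
  have hw1 : ∀ a : F, r2 (r1 (r0 (r1 (r2 (a, 1))))) = (s2 (s1 (s2 a)), 1) := by
    intro a; rw [hr21, hr11, hr02, hr12, hr21]
  have hw2 : ∀ a : F, r2 (r1 (r0 (r1 (r2 (a, 2))))) = (s2 (s1 (s2 a)), 2) := by
    intro a; rw [hr22, hr10, hr00, hr10, hr20]
  set GM := Subgroup.centralizer ({s0, s1, s2} : Set (Equiv.Perm F)) with hGMdef
  set GT := Subgroup.centralizer ({r0, r1, r2} : Set (Equiv.Perm (F × Fin 3))) with hGTdef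
  have memGM : ∀ g : Equiv.Perm F, g ∈ GM →
      (∀ x, g (s0 x) = s0 (g x)) ∧ (∀ x, g (s1 x) = s1 (g x)) ∧ (∀ x, g (s2 x) = s2 (g x)) := by
    intro g hg
    rw [hGMdef, Subgroup.mem_centralizer_iff] at hg
    refine ⟨fun x => ?_, fun x => ?_, fun x => ?_⟩
    · simpa using (Equiv.ext_iff.mp (hg s0 (by simp)) x).symm
    · simpa using (Equiv.ext_iff.mp (hg s1 (by simp)) x).symm
    · simpa using (Equiv.ext_iff.mp (hg s2 (by simp)) x).symm
  have memGT : ∀ g : Equiv.Perm (F × Fin 3), g ∈ GT →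
      (∀ y, g (r0 y) = r0 (g y)) ∧ (∀ y, g (r1 y) = r1 (g y)) ∧ (∀ y, g (r2 y) = r2 (g y)) := by
    intro g hg
    rw [hGTdef, Subgroup.mem_centralizer_iff] at hg
    refine ⟨fun y => ?_, fun y => ?_, fun y => ?_⟩
    · simpa using (Equiv.ext_iff.mp (hg r0 (by simp)) y).symm
    · simpa using (Equiv.ext_iff.mp (hg r1 (by simp)) y).symm
    · simpa using (Equiv.ext_iff.mp (hg r2 (by simp)) y).symm
  -- orbit images under commuting permutations
  have orbimg : ∀ t : Equiv.Perm F, (∀ g ∈ GM, ∀ x, g (t x) = t (g x)) →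
      ∀ x : F, ⇑t '' MulAction.orbit (↥GM) x = MulAction.orbit (↥GM) (t x) := by
    intro t ht x
    ext y
    simp only [Set.mem_image, MulAction.mem_orbit_iff, Submonoid.smul_def,
      Equiv.Perm.smul_def]
    constructor
    · rintro ⟨z, ⟨γ, rfl⟩, rfl⟩
      exact ⟨γ, ht ↑γ γ.2 x⟩
    · rintro ⟨γ, rfl⟩
      exact ⟨(↑γ : Equiv.Perm F) x, ⟨γ, rfl⟩, (ht ↑γ γ.2 x).symm⟩
  have torbimg : ∀ t : Equiv.Perm (F × Fin 3), (∀ g ∈ GT, ∀ y, g (t y) = t (g y)) →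
      ∀ y : F × Fin 3, ⇑t '' MulAction.orbit (↥GT) y = MulAction.orbit (↥GT) (t y) := by
    intro t ht y
    ext z
    simp only [Set.mem_image, MulAction.mem_orbit_iff, Submonoid.smul_def,
      Equiv.Perm.smul_def]
    constructor
    · rintro ⟨w, ⟨γ, rfl⟩, rfl⟩
      exact ⟨γ, ht ↑γ γ.2 y⟩
    · rintro ⟨γ, rfl⟩
      exact ⟨(↑γ : Equiv.Perm (F × Fin 3)) y, ⟨γ, rfl⟩, (ht ↑γ γ.2 y).symm⟩
  -- quotient equalities
  have mkQeq : ∀ x y : F, (Quotient.mk'' x : MulAction.orbitRel.Quotient (↥GM) F) = Quotient.mk'' y ↔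
      MulAction.orbit (↥GM) x = MulAction.orbit (↥GM) y := by
    intro x y
    rw [Quotient.eq'']
    exact (MulAction.orbit_eq_iff).symm
  have mkTeq : ∀ y y' : F × Fin 3,
      (Quotient.mk'' y : MulAction.orbitRel.Quotient (↥GT) (F × Fin 3)) = Quotient.mk'' y' ↔
      MulAction.orbit (↥GT) y = MulAction.orbit (↥GT) y' := by
    intro y y'
    rw [Quotient.eq'']
    exact (MulAction.orbit_eq_iff).symm
  letI instQM : Fintype (MulAction.orbitRel.Quotient (↥GM) F) := Fintype.ofFinite _
  letI instQT : Fintype (MulAction.orbitRel.Quotient (↥GT) (F × Fin 3)) := Fintype.ofFinite _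
  have cardQM : Fintype.card (MulAction.orbitRel.Quotient (↥GM) F) = 3 := by
    rw [← Nat.card_eq_fintype_card]; exact hM3
  have cardQT : Fintype.card (MulAction.orbitRel.Quotient (↥GT) (F × Fin 3)) = 3 := by
    rw [← Nat.card_eq_fintype_card]; exact hTr3
  have cQ : MulAction.orbitRel.Quotient (↥GM) F ≃ Fin 3 := Fintype.equivFinOfCardEq cardQM
  set m : F → Fin 3 := fun x => cQ (Quotient.mk'' x) with hm
  have meq : ∀ x y : F, m x = m y ↔ MulAction.orbit (↥GM) x = MulAction.orbit (↥GM) y := by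
    intro x y
    constructor
    · intro h; exact (mkQeq x y).mp (cQ.injective h)
    · intro h; exact congrArg cQ ((mkQeq x y).mpr h)
  have msurj : ∀ j : Fin 3, ∃ x : F, m x = j := by
    intro j
    refine ⟨(cQ.symm j).out, ?_⟩
    rw [hm]
    simp only []
    rw [Quotient.out_eq', Equiv.apply_symm_apply]
  have mstep : ∀ t : Equiv.Perm F, (∀ g ∈ GM, ∀ x, g (t x) = t (g x)) →
      ∀ x y, m x = m y → m (t x) = m (t y) := by
    intro t ht x y h
    rw [meq] at h ⊢
    rw [← orbimg t ht x, ← orbimg t ht y, h]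
  choose rep hrep using msurj
  have msurj : ∀ j : Fin 3, ∃ x : F, m x = j := fun j => ⟨rep j, hrep j⟩
  have comm0 : ∀ g ∈ GM, ∀ x, g (s0 x) = s0 (g x) := fun g hg => (memGM g hg).1
  have comm1 : ∀ g ∈ GM, ∀ x, g (s1 x) = s1 (g x) := fun g hg => (memGM g hg).2.1
  have comm2 : ∀ g ∈ GM, ∀ x, g (s2 x) = s2 (g x) := fun g hg => (memGM g hg).2.2
  have tcomm0 : ∀ g ∈ GT, ∀ y, g (r0 y) = r0 (g y) := fun g hg => (memGT g hg).1
  have tcomm1 : ∀ g ∈ GT, ∀ y, g (r1 y) = r1 (g y) := fun g hg => (memGT g hg).2.1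
  have tcomm2 : ∀ g ∈ GT, ∀ y, g (r2 y) = r2 (g y) := fun g hg => (memGT g hg).2.2
  set sg0 : Fin 3 → Fin 3 := fun j => m (s0 (rep j)) with hsg0
  set sg1 : Fin 3 → Fin 3 := fun j => m (s1 (rep j)) with hsg1
  set sg2 : Fin 3 → Fin 3 := fun j => m (s2 (rep j)) with hsg2
  have sg0spec : ∀ x, sg0 (m x) = m (s0 x) := fun x => mstep s0 comm0 (rep (m x)) x (hrep (m x))
  have sg1spec : ∀ x, sg1 (m x) = m (s1 x) := fun x => mstep s1 comm1 (rep (m x)) x (hrep (m x))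
  have sg2spec : ∀ x, sg2 (m x) = m (s2 x) := fun x => mstep s2 comm2 (rep (m x)) x (hrep (m x))
  -- the natural map from M-orbits to Tr(M)-orbits, on representatives
  have embed : ∀ Φ Ψ : F, m Φ = m Ψ →
      (Quotient.mk'' (Φ, 0) : MulAction.orbitRel.Quotient (↥GT) (F × Fin 3)) =
        Quotient.mk'' (Ψ, 0) := by
    intro Φ Ψ h
    rw [meq] at h
    obtain ⟨γ, hγ⟩ := MulAction.mem_orbit_iff.mp (MulAction.orbit_eq_iff.mp h)
    have hγ' : (↑γ : Equiv.Perm F) Ψ = Φ := hγ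
    obtain ⟨hγ0, hγ1, hγ2⟩ := memGM ↑γ γ.2
    refine (mkTeq _ _).mpr (MulAction.orbit_eq_iff.mpr (MulAction.mem_orbit_iff.mpr
      ⟨⟨Equiv.prodCongr ↑γ (Equiv.refl (Fin 3)), ?_⟩, ?_⟩))
    · rw [hGTdef, Subgroup.mem_centralizer_iff]
      intro h hh
      have hh' : h = r0 ∨ h = r1 ∨ h = r2 := by simpa using hh
      rcases hh' with rfl | rfl | rfl <;>
        · refine Equiv.ext ?_
          rintro ⟨a, i⟩
          rcases f3 i with rfl | rfl | rfl <;>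
            simp [Equiv.Perm.mul_apply, hr00, hr01, hr02, hr10, hr11, hr12,
              hr20, hr21, hr22, hγ0, hγ1, hγ2]
    · show Equiv.prodCongr (↑γ) (Equiv.refl (Fin 3)) (Ψ, 0) = (Φ, 0)
      simp [hγ']
  -- rigidity: an automorphism of the truncation sending a layer-0 flag to a layer-0 flag
  -- comes from an automorphism of M
  have rigid : ∀ Φ Ψ : F,
      (Quotient.mk'' (Φ, 0) : MulAction.orbitRel.Quotient (↥GT) (F × Fin 3)) =
        Quotient.mk'' (Ψ, 0) → m Φ = m Ψ := by
    intro Φ Ψ h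
    rw [mkTeq] at h
    obtain ⟨γ, hγ⟩ := MulAction.mem_orbit_iff.mp (MulAction.orbit_eq_iff.mp h)
    have hγ' : (↑γ : Equiv.Perm (F × Fin 3)) (Ψ, 0) = (Φ, 0) := hγ
    obtain ⟨c0, c1, c2⟩ := memGT ↑γ γ.2
    have cw : ∀ y, (↑γ : Equiv.Perm (F × Fin 3)) (r2 (r1 (r0 (r1 (r2 y))))) =
        r2 (r1 (r0 (r1 (r2 ((↑γ : Equiv.Perm (F × Fin 3)) y))))) := by
      intro y; rw [c2, c1, c0, c1, c2]
    set S : Set F := {x : F | ((↑γ : Equiv.Perm (F × Fin 3)) (x, 0)).2 = 0} with hS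
    have k0 : ∀ x, x ∈ S ↔ s0 x ∈ S := by
      intro x
      show ((↑γ : Equiv.Perm (F × Fin 3)) (x, 0)).2 = 0 ↔
        ((↑γ : Equiv.Perm (F × Fin 3)) (s0 x, 0)).2 = 0
      rw [← hw0 x, cw]
      obtain ⟨a, i⟩ := (↑γ : Equiv.Perm (F × Fin 3)) (x, 0)
      rcases f3 i with rfl | rfl | rfl <;> simp [hw0, hw1, hw2]
    have k1 : ∀ x, x ∈ S ↔ s1 x ∈ S := by
      intro x
      show ((↑γ : Equiv.Perm (F × Fin 3)) (x, 0)).2 = 0 ↔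
        ((↑γ : Equiv.Perm (F × Fin 3)) (s1 x, 0)).2 = 0
      rw [← hr00 x, c0]
      obtain ⟨a, i⟩ := (↑γ : Equiv.Perm (F × Fin 3)) (x, 0)
      rcases f3 i with rfl | rfl | rfl <;> simp [hr00, hr01, hr02]
    have k2 : ∀ x, x ∈ S ↔ s2 x ∈ S := by
      intro x
      show ((↑γ : Equiv.Perm (F × Fin 3)) (x, 0)).2 = 0 ↔
        ((↑γ : Equiv.Perm (F × Fin 3)) (s2 x, 0)).2 = 0
      rw [← hr10 x, c1]
      obtain ⟨a, i⟩ := (↑γ : Equiv.Perm (F × Fin 3)) (x, 0)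
      rcases f3 i with rfl | rfl | rfl <;> simp [hr10, hr11, hr12]
    have base : Ψ ∈ S := by
      show ((↑γ : Equiv.Perm (F × Fin 3)) (Ψ, 0)).2 = 0
      rw [hγ']
    have hall : ∀ x, ((↑γ : Equiv.Perm (F × Fin 3)) (x, 0)).2 = 0 := by
      intro x
      obtain ⟨g', hg'mem, hg'⟩ := htrans Ψ x
      have := (invariant_of_closure k0 k1 k2 g' hg'mem Ψ).mp base
      rwa [hg'] at this
    have gfull : ∀ x : F, (↑γ : Equiv.Perm (F × Fin 3)) (x, 0) =
        (((↑γ : Equiv.Perm (F × Fin 3)) (x, 0)).1, 0) := by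
      intro x
      exact Prod.ext rfl (hall x)
    set gF : F → F := fun x => ((↑γ : Equiv.Perm (F × Fin 3)) (x, 0)).1 with hgF
    have gc0 : ∀ x, gF (s0 x) = s0 (gF x) := by
      intro x
      have e1 : (↑γ : Equiv.Perm (F × Fin 3)) (s0 x, 0) = (s0 (gF x), 0) := by
        rw [← hw0 x, cw, gfull x, hw0]
      rw [hgF]
      simp only []
      rw [e1]
    have gc1 : ∀ x, gF (s1 x) = s1 (gF x) := by
      intro x
      have e1 : (↑γ : Equiv.Perm (F × Fin 3)) (s1 x, 0) = (s1 (gF x), 0) := by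
        rw [← hr00 x, c0, gfull x, hr00]
      rw [hgF]
      simp only []
      rw [e1]
    have gc2 : ∀ x, gF (s2 x) = s2 (gF x) := by
      intro x
      have e1 : (↑γ : Equiv.Perm (F × Fin 3)) (s2 x, 0) = (s2 (gF x), 0) := by
        rw [← hr10 x, c1, gfull x, hr10]
      rw [hgF]
      simp only []
      rw [e1]
    have gInj : Function.Injective gF := by
      intro x y hxy
      have hxy' : (↑γ : Equiv.Perm (F × Fin 3)) (x, 0) = (↑γ : Equiv.Perm (F × Fin 3)) (y, 0) := by
        rw [gfull x, gfull y]
        exact congrArg (fun a => (a, (0 : Fin 3))) hxy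
      have := (↑γ : Equiv.Perm (F × Fin 3)).injective hxy'
      exact congrArg Prod.fst this
    have gBij := Finite.injective_iff_bijective.mp gInj
    have gFΨ : gF Ψ = Φ := by
      rw [hgF]
      simp only []
      rw [hγ']
    rw [meq]
    refine MulAction.orbit_eq_iff.mpr (MulAction.mem_orbit_iff.mpr
      ⟨⟨Equiv.ofBijective gF gBij, ?_⟩, ?_⟩)
    · rw [hGMdef, Subgroup.mem_centralizer_iff]
      intro h hh
      have hh' : h = s0 ∨ h = s1 ∨ h = s2 := by simpa using hh
      rcases hh' with rfl | rfl | rfl <;>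
        · refine Equiv.ext ?_
          intro x
          simp only [Equiv.Perm.mul_apply, Equiv.ofBijective_apply]
          first
          | exact (gc0 x).symm
          | exact (gc1 x).symm
          | exact (gc2 x).symm
    · show Equiv.ofBijective gF gBij Ψ = Φ
      simpa using gFΨ
  -- identify the Tr(M)-orbits with Fin 3 through the layer-0 map
  set B : Fin 3 → MulAction.orbitRel.Quotient (↥GT) (F × Fin 3) :=
    fun j => Quotient.mk'' (rep j, 0) with hB
  have Binj : Function.Injective B := by
    intro j j' hjj
    have := rigid _ _ hjj
    rwa [hrep, hrep] at this
  have Bbij : Function.Bijective B :=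
    (Fintype.bijective_iff_injective_and_card B).mpr ⟨Binj, by rw [cardQT]; simp⟩
  set eB := Equiv.ofBijective B Bbij with heB
  set mT : F × Fin 3 → Fin 3 := fun y => eB.symm (Quotient.mk'' y) with hmT
  have mT0 : ∀ Φ : F, mT (Φ, 0) = m Φ := by
    intro Φ
    apply eB.injective
    rw [hmT]
    simp only []
    rw [Equiv.apply_symm_apply]
    show (Quotient.mk'' (Φ, 0) : MulAction.orbitRel.Quotient (↥GT) (F × Fin 3)) = eB (m Φ)
    have : eB (m Φ) = Quotient.mk'' (rep (m Φ), 0) := by rw [heB]; simp [hB]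
    rw [this]
    exact (embed _ _ (hrep (m Φ))).symm
  have mTeq : ∀ y y' : F × Fin 3, mT y = mT y' ↔
      MulAction.orbit (↥GT) y = MulAction.orbit (↥GT) y' := by
    intro y y'
    rw [← mkTeq]
    constructor
    · intro h; exact eB.symm.injective h
    · intro h; rw [hmT]; simp only []; rw [h]
  have mTsurj : ∀ j : Fin 3, ∃ y, mT y = j := by
    intro j
    refine ⟨(eB j).out, ?_⟩
    rw [hmT]
    simp only []
    rw [Quotient.out_eq', Equiv.symm_apply_apply]
  choose repT hrepT using mTsurj
  have mTsurj : ∀ j : Fin 3, ∃ y, mT y = j := fun j => ⟨repT j, hrepT j⟩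
  have tstep : ∀ t : Equiv.Perm (F × Fin 3), (∀ g ∈ GT, ∀ y, g (t y) = t (g y)) →
      ∀ y y', mT y = mT y' → mT (t y) = mT (t y') := by
    intro t ht y y' h
    rw [mTeq] at h ⊢
    rw [← torbimg t ht y, ← torbimg t ht y', h]
  set rg0 : Fin 3 → Fin 3 := fun j => mT (r0 (repT j)) with hrg0
  set rg1 : Fin 3 → Fin 3 := fun j => mT (r1 (repT j)) with hrg1
  set rg2 : Fin 3 → Fin 3 := fun j => mT (r2 (repT j)) with hrg2
  have rg0spec : ∀ y, rg0 (mT y) = mT (r0 y) := fun y => tstep r0 tcomm0 (repT (mT y)) y (hrepT (mT y))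
  have rg1spec : ∀ y, rg1 (mT y) = mT (r1 y) := fun y => tstep r1 tcomm1 (repT (mT y)) y (hrepT (mT y))
  have rg2spec : ∀ y, rg2 (mT y) = mT (r2 y) := fun y => tstep r2 tcomm2 (repT (mT y)) y (hrepT (mT y))
  -- relations between the induced permutations
  have R1 : ∀ j, rg0 j = sg1 j := by
    intro j
    obtain ⟨x, rfl⟩ := msurj j
    calc rg0 (m x) = rg0 (mT (x, 0)) := by rw [mT0]
      _ = mT (r0 (x, 0)) := rg0spec _
      _ = mT (s1 x, 0) := by rw [hr00]
      _ = m (s1 x) := mT0 _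
      _ = sg1 (m x) := (sg1spec x).symm
  have R2 : ∀ j, rg1 j = sg2 j := by
    intro j
    obtain ⟨x, rfl⟩ := msurj j
    calc rg1 (m x) = rg1 (mT (x, 0)) := by rw [mT0]
      _ = mT (r1 (x, 0)) := rg1spec _
      _ = mT (s2 x, 0) := by rw [hr10]
      _ = m (s2 x) := mT0 _
      _ = sg2 (m x) := (sg2spec x).symm
  have Rstar : ∀ j, sg1 (sg2 (rg2 j)) = sg2 (rg2 (sg0 j)) := by
    intro j
    obtain ⟨x, rfl⟩ := msurj j
    have L : sg1 (sg2 (rg2 (m x))) = mT (s0 x, 1) := by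
      calc sg1 (sg2 (rg2 (m x)))
          = sg1 (sg2 (rg2 (mT (x, 0)))) := by rw [mT0]
        _ = sg1 (sg2 (mT (r2 (x, 0)))) := by rw [rg2spec]
        _ = sg1 (sg2 (mT (x, 2))) := by rw [hr20]
        _ = sg1 (rg1 (mT (x, 2))) := by rw [R2]
        _ = sg1 (mT (r1 (x, 2))) := by rw [rg1spec]
        _ = sg1 (mT (x, 1)) := by rw [hr12]
        _ = rg0 (mT (x, 1)) := by rw [R1]
        _ = mT (r0 (x, 1)) := rg0spec _
        _ = mT (s0 x, 1) := by rw [hr01]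
    have R : sg2 (rg2 (sg0 (m x))) = mT (s0 x, 1) := by
      calc sg2 (rg2 (sg0 (m x)))
          = sg2 (rg2 (m (s0 x))) := by rw [sg0spec]
        _ = sg2 (rg2 (mT (s0 x, 0))) := by rw [mT0]
        _ = sg2 (mT (r2 (s0 x, 0))) := by rw [rg2spec]
        _ = sg2 (mT (s0 x, 2)) := by rw [hr20]
        _ = rg1 (mT (s0 x, 2)) := by rw [R2]
        _ = mT (r1 (s0 x, 2)) := rg1spec _
        _ = mT (s0 x, 1) := by rw [hr12]
    rw [L, R]
  -- involutivity and commutation at the level of Fin 3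
  have I0 : Function.Involutive sg0 := by
    intro j
    obtain ⟨x, rfl⟩ := msurj j
    calc sg0 (sg0 (m x)) = sg0 (m (s0 x)) := congrArg sg0 (sg0spec x)
      _ = m (s0 (s0 x)) := sg0spec _
      _ = m x := by rw [ps0]
  have I1 : Function.Involutive sg1 := by
    intro j
    obtain ⟨x, rfl⟩ := msurj j
    calc sg1 (sg1 (m x)) = sg1 (m (s1 x)) := congrArg sg1 (sg1spec x)
      _ = m (s1 (s1 x)) := sg1spec _
      _ = m x := by rw [ps1]
  have I2 : Function.Involutive sg2 := by
    intro j
    obtain ⟨x, rfl⟩ := msurj j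
    calc sg2 (sg2 (m x)) = sg2 (m (s2 x)) := congrArg sg2 (sg2spec x)
      _ = m (s2 (s2 x)) := sg2spec _
      _ = m x := by rw [ps2]
  have Iρ : Function.Involutive rg2 := by
    intro j
    obtain ⟨y, rfl⟩ := mTsurj j
    calc rg2 (rg2 (mT y)) = rg2 (mT (r2 y)) := congrArg rg2 (rg2spec y)
      _ = mT (r2 (r2 y)) := rg2spec _
      _ = mT y := by rw [pr2]
  have c02 : ∀ j, sg0 (sg2 j) = sg2 (sg0 j) := by
    intro j
    obtain ⟨x, rfl⟩ := msurj j
    calc sg0 (sg2 (m x)) = sg0 (m (s2 x)) := congrArg sg0 (sg2spec x)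
      _ = m (s0 (s2 x)) := sg0spec _
      _ = m (s2 (s0 x)) := by rw [pc]
      _ = sg2 (m (s0 x)) := (sg2spec _).symm
      _ = sg2 (sg0 (m x)) := by rw [sg0spec]
  have c1r : ∀ j, sg1 (rg2 j) = rg2 (sg1 j) := by
    intro j
    obtain ⟨y, rfl⟩ := mTsurj j
    calc sg1 (rg2 (mT y)) = sg1 (mT (r2 y)) := congrArg sg1 (rg2spec y)
      _ = rg0 (mT (r2 y)) := by rw [R1]
      _ = mT (r0 (r2 y)) := rg0spec _
      _ = mT (r2 (r0 y)) := by rw [prc]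
      _ = rg2 (mT (r0 y)) := (rg2spec _).symm
      _ = rg2 (rg0 (mT y)) := by rw [rg0spec]
      _ = rg2 (sg1 (mT y)) := by rw [R1]
  have htrF : ∀ s : Finset (Fin 3), s.Nonempty →
      (∀ x ∈ s, sg0 x ∈ s ∧ sg1 x ∈ s ∧ sg2 x ∈ s) → s = Finset.univ := by
    rintro s ⟨j0, hj0⟩ hcl
    obtain ⟨x0, hx0⟩ := msurj j0
    set SS : Set F := {x : F | m x ∈ s} with hSS
    have k0 : ∀ x, x ∈ SS ↔ s0 x ∈ SS := by
      intro x
      show m x ∈ s ↔ m (s0 x) ∈ s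
      constructor
      · intro h; rw [← sg0spec]; exact (hcl _ h).1
      · intro h
        have := (hcl _ h).1
        rwa [sg0spec, ps0] at this
    have k1 : ∀ x, x ∈ SS ↔ s1 x ∈ SS := by
      intro x
      show m x ∈ s ↔ m (s1 x) ∈ s
      constructor
      · intro h; rw [← sg1spec]; exact (hcl _ h).2.1
      · intro h
        have := (hcl _ h).2.1
        rwa [sg1spec, ps1] at this
    have k2 : ∀ x, x ∈ SS ↔ s2 x ∈ SS := by
      intro x
      show m x ∈ s ↔ m (s2 x) ∈ s
      constructor
      · intro h; rw [← sg2spec]; exact (hcl _ h).2.2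
      · intro h
        have := (hcl _ h).2.2
        rwa [sg2spec, ps2] at this
    apply Finset.eq_univ_iff_forall.mpr
    intro j
    obtain ⟨y, hy⟩ := msurj j
    obtain ⟨g', hg'mem, hg'⟩ := htrans x0 y
    have hx0S : x0 ∈ SS := by show m x0 ∈ s; rw [hx0]; exact hj0
    have := (invariant_of_closure k0 k1 k2 g' hg'mem x0).mp hx0S
    rw [hg'] at this
    rw [← hy]
    exact this
  -- apply the combinatorial classification
  obtain ⟨H02, Hr2, a, b, c, hab, hac, hbc, hcov, t1, t2', t3, t4, t5, t6⟩ :=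
    fin3_main (Function.Involutive.toPerm sg0 I0) (Function.Involutive.toPerm sg1 I1)
      (Function.Involutive.toPerm sg2 I2) (Function.Involutive.toPerm rg2 Iρ)
      I0 I1 I2 Iρ c02 c1r Rstar htrF
  have h02 : ∀ j, sg0 j = sg2 j := H02
  have hρ2 : ∀ j, rg2 j = sg1 j := Hr2
  -- image helpers
  have himg : ∀ t : Equiv.Perm F, (∀ g ∈ GM, ∀ x, g (t x) = t (g x)) →
      ∀ j k : Fin 3, m (t (rep j)) = k →
      ⇑t '' MulAction.orbit (↥GM) (rep j) = MulAction.orbit (↥GM) (rep k) := by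
    intro t ht j k hk
    rw [orbimg t ht]
    exact (meq _ _).mp (by rw [hk, hrep])
  have himgT : ∀ t : Equiv.Perm (F × Fin 3), (∀ g ∈ GT, ∀ y, g (t y) = t (g y)) →
      ∀ j k : Fin 3, mT (t (repT j)) = k →
      ⇑t '' MulAction.orbit (↥GT) (repT j) = MulAction.orbit (↥GT) (repT k) := by
    intro t ht j k hk
    rw [torbimg t ht]
    exact (mTeq _ _).mp (by rw [hk, hrepT])
  constructor
  · -- M is of type 3^{02}
    unfold isOfType302 mapAut
    rw [← hGMdef]
    refine ⟨MulAction.orbit (↥GM) (rep a), MulAction.orbit (↥GM) (rep b),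
      MulAction.orbit (↥GM) (rep c), ⟨rep a, rfl⟩, ⟨rep b, rfl⟩, ⟨rep c, rfl⟩,
      ?_, ?_, ?_, ?_, ?_, ?_, ?_, ?_, ?_, ?_, ?_, ?_, ?_⟩
    · intro h
      exact hab (by rw [← hrep a, ← hrep b]; exact (meq _ _).mpr h)
    · intro h
      exact hac (by rw [← hrep a, ← hrep c]; exact (meq _ _).mpr h)
    · intro h
      exact hbc (by rw [← hrep b, ← hrep c]; exact (meq _ _).mpr h)
    · intro x
      rcases hcov (m x) with h | h | h
      · exact Or.inl ((meq x (rep a)).mp (by rw [hrep]; exact h))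
      · exact Or.inr (Or.inl ((meq x (rep b)).mp (by rw [hrep]; exact h)))
      · exact Or.inr (Or.inr ((meq x (rep c)).mp (by rw [hrep]; exact h)))
    · exact himg s0 comm0 a a ((h02 a).trans t1)
    · exact himg s0 comm0 b c ((h02 b).trans t2')
    · exact himg s0 comm0 c b ((h02 c).trans t3)
    · exact himg s2 comm2 a a t1
    · exact himg s2 comm2 b c t2'
    · exact himg s2 comm2 c b t3
    · exact himg s1 comm1 a b t4
    · exact himg s1 comm1 b a t5
    · exact himg s1 comm1 c c t6
  · -- Tr(M) is of type 3^{02}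
    unfold isOfType302 mapAut
    rw [← hGTdef]
    refine ⟨MulAction.orbit (↥GT) (repT c), MulAction.orbit (↥GT) (repT b),
      MulAction.orbit (↥GT) (repT a), ⟨repT c, rfl⟩, ⟨repT b, rfl⟩, ⟨repT a, rfl⟩,
      ?_, ?_, ?_, ?_, ?_, ?_, ?_, ?_, ?_, ?_, ?_, ?_, ?_⟩
    · intro h
      apply hbc
      have := (mTeq _ _).mpr h
      rw [hrepT, hrepT] at this
      exact this.symm
    · intro h
      apply hac
      have := (mTeq _ _).mpr h
      rw [hrepT, hrepT] at this
      exact this.symm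
    · intro h
      apply hab
      have := (mTeq _ _).mpr h
      rw [hrepT, hrepT] at this
      exact this.symm
    · intro y
      rcases hcov (mT y) with h | h | h
      · exact Or.inr (Or.inr ((mTeq y (repT a)).mp (by rw [hrepT]; exact h)))
      · exact Or.inr (Or.inl ((mTeq y (repT b)).mp (by rw [hrepT]; exact h)))
      · exact Or.inl ((mTeq y (repT c)).mp (by rw [hrepT]; exact h))
    · exact himgT r0 tcomm0 c c ((R1 c).trans t6)
    · exact himgT r0 tcomm0 b a ((R1 b).trans t5)
    · exact himgT r0 tcomm0 a b ((R1 a).trans t4)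
    · exact himgT r2 tcomm2 c c ((hρ2 c).trans t6)
    · exact himgT r2 tcomm2 b a ((hρ2 b).trans t5)
    · exact himgT r2 tcomm2 a b ((hρ2 a).trans t4)
    · exact himgT r1 tcomm1 c b ((R2 c).trans t3)
    · exact himgT r1 tcomm1 b c ((R2 b).trans t2')
    · exact himgT r1 tcomm1 a a ((R2 a).trans t1)
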